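/- Let R and S be commutative rings with unity, f : R → S a ring homomorphism, and J an ideal of S that is finitely generated as an R-module via f. Then the embedding ι_R : R → R⋈^f J is an integral ring extension, and for every prime ideal p of R one has (p^e)^c = p and dim((R⋈^f J)/p^e) = dim(R/p), where dim denotes Krull dimension. -/

import Mathlib

open IsLocalRing RingTheory.Sequence

noncomputable section

universe u

/-- The Krull dimension of a module `M`, defined as `dim (R / Ann_R M)`. -/
def moduleDim (R : Type u) [CommRing R] (M : Type u) [AddCommGroup M] [Module R M] :
    WithBot ℕ∞ :=
  ringKrullDim (R ⧸ Module.annihilator R M)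


/-- Addition of (possibly infinite, possibly `⊥`) dimensions. -/
def dimAdd (a b : WithBot ℕ∞) : WithBot ℕ∞ := a + b

/-- `xs` is a generalized regular sequence of `M`: a sequence of nonunits (i.e. elements of the
maximal ideal, in the local case) such that `xs[i] ∉ p` for every associated prime `p` of
`M / (xs[0], …, xs[i-1])M` with `dim R/p > 1`. -/
def IsGenRegSeq (R : Type u) [CommRing R] (M : Type u) [AddCommGroup M] [Module R M]
    (xs : List R) : Prop :=
  (∀ x ∈ xs, x ∈ nonunits R) ∧
  ∀ i (_ : i < xs.length),
    ∀ p ∈ associatedPrimes R (M ⧸ (Ideal.ofList (xs.take i) • ⊤ : Submodule R M)),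
      1 < ringKrullDim (R ⧸ p) → xs[i] ∉ p

/-- `xs` is a filter regular sequence of `M`: a sequence of nonunits (elements of the maximal
ideal, in the local case) such that `xs[i] ∉ p` for every non-maximal associated prime `p` of
`M / (xs[0], …, xs[i-1])M` (in a local ring, `¬ p.IsMaximal ↔ p ≠ 𝔪`). -/
def IsFilterRegSeq (R : Type u) [CommRing R] (M : Type u) [AddCommGroup M] [Module R M]
    (xs : List R) : Prop :=
  (∀ x ∈ xs, x ∈ nonunits R) ∧
  ∀ i (_ : i < xs.length),
    ∀ p ∈ associatedPrimes R (M ⧸ (Ideal.ofList (xs.take i) • ⊤ : Submodule R M)),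
      ¬ p.IsMaximal → xs[i] ∉ p

open Classical in
/-- The generalized depth `gd(I, M)`: the length of a maximal generalized regular sequence of `M`
contained in `I` (equivalently, the sup of lengths of all such sequences) if `dim M/IM > 1`,
and `∞` if `dim M/IM ≤ 1`. -/
def gd {R : Type u} [CommRing R] (I : Ideal R) (M : Type u) [AddCommGroup M] [Module R M] :
    ℕ∞ :=
  if moduleDim R (M ⧸ (I • ⊤ : Submodule R M)) ≤ 1 then ⊤
  else sSup {n : ℕ∞ |
    ∃ xs : List R, IsGenRegSeq R M xs ∧ (∀ x ∈ xs, x ∈ I) ∧ (xs.length : ℕ∞) = n}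

/-- The filter depth `fd(I, M)`: the length of a maximal filter regular sequence of `M`
contained in `I` (equivalently, the sup of lengths of all such sequences). -/
def fd {R : Type u} [CommRing R] (I : Ideal R) (M : Type u) [AddCommGroup M] [Module R M] :
    ℕ∞ :=
  sSup {n : ℕ∞ |
    ∃ xs : List R, IsFilterRegSeq R M xs ∧ (∀ x ∈ xs, x ∈ I) ∧ (xs.length : ℕ∞) = n}

/-- The filter depth of `I` on `M`, characterized via local cohomology:
`fd(I, M) = inf { r : H^r_I(M) is not an Artinian R-module }` (`∞` if no such `r`). -/
def fdLC {R : Type u} [CommRing R] (I : Ideal R) (M : Type u) [AddCommGroup M] [Module R M] :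
    ℕ∞ :=
  sInf ((fun r : ℕ => (r : ℕ∞)) ''
    {r : ℕ | ¬ IsArtinian R ↥((localCohomology I r).obj (ModuleCat.of R M))})

/-- `xs` is a system of parameters of `M`: a sequence of `dim M` many elements of the maximal
ideal (nonunits) with `dim M/(xs)M = 0`. -/
def IsSOP (R : Type u) [CommRing R] (M : Type u) [AddCommGroup M] [Module R M]
    (xs : List R) : Prop :=
  (∀ x ∈ xs, x ∈ nonunits R) ∧ (xs.length : WithBot ℕ∞) = moduleDim R M ∧
  moduleDim R (M ⧸ (Ideal.ofList xs • ⊤ : Submodule R M)) = 0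

/-- `M` is a generalized f-module: every system of parameters of `M` is a generalized regular
sequence of `M`. -/
def IsGenFModule (R : Type u) [CommRing R] (M : Type u) [AddCommGroup M] [Module R M] : Prop :=
  ∀ xs : List R, IsSOP R M xs → IsGenRegSeq R M xs

/-- `M` is an f-module: every system of parameters of `M` is a filter regular sequence of `M`. -/
def IsFModule (R : Type u) [CommRing R] (M : Type u) [AddCommGroup M] [Module R M] : Prop :=
  ∀ xs : List R, IsSOP R M xs → IsFilterRegSeq R M xs

/-- A generalized f-ring: a generalized f-module over itself. -/
def IsGenFRing (R : Type u) [CommRing R] : Prop := IsGenFModule R R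

/-- An f-ring: an f-module over itself. -/
def IsFRing (R : Type u) [CommRing R] : Prop := IsFModule R R

/-- `M` is a maximal generalized f-module: `gd(p, M) = dim R - dim R/p`
(stated additively, as `gd(p, M) + dim R/p = dim R`) for every prime `p` in the support of `M`
with `dim R/p > 1`. -/
def IsMaxGenFModule (R : Type u) [CommRing R] (M : Type u) [AddCommGroup M] [Module R M] :
    Prop :=
  ∀ (p : Ideal R) (hp : p.IsPrime), (⟨p, hp⟩ : PrimeSpectrum R) ∈ Module.support R M →
    1 < ringKrullDim (R ⧸ p) →
    dimAdd (gd p M) (ringKrullDim (R ⧸ p)) = ringKrullDim R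

/-- `M` is a maximal f-module: `fd(p, M) = dim R - dim R/p`
(stated additively, as `fd(p, M) + dim R/p = dim R`) for every prime `p ≠ 𝔪` in the support of
`M` (in a local ring, `¬ p.IsMaximal ↔ p ≠ 𝔪`). -/
def IsMaxFModule (R : Type u) [CommRing R] [IsLocalRing R] (M : Type u) [AddCommGroup M]
    [Module R M] : Prop :=
  ∀ (p : Ideal R) (hp : p.IsPrime), (⟨p, hp⟩ : PrimeSpectrum R) ∈ Module.support R M →
    p ≠ maximalIdeal R →
    dimAdd (fd p M) (ringKrullDim (R ⧸ p)) = ringKrullDim R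

/-- The depth of a module over a local ring: the length of a maximal `M`-regular sequence of
nonunits (i.e. contained in the maximal ideal, in the local case). -/
def moduleDepth (R : Type u) [CommRing R] (M : Type u) [AddCommGroup M] [Module R M] : ℕ∞ :=
  sSup {n : ℕ∞ |
    ∃ xs : List R, IsRegular M xs ∧ (∀ x ∈ xs, x ∈ nonunits R) ∧ (xs.length : ℕ∞) = n}

/-- `M` is a maximal Cohen-Macaulay module over the local ring `R`: `depth M = dim R`. -/
def IsMaxCM (R : Type u) [CommRing R] (M : Type u) [AddCommGroup M] [Module R M] : Prop :=
  (moduleDepth R M : WithBot ℕ∞) = ringKrullDim R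

/-- The amalgamation `R ⋈^f J` of `R` with `S` along the ideal `J ⊆ S` with respect to
`f : R →+* S`: the subring `{(r, f r + j) : r ∈ R, j ∈ J}` of `R × S`, here described as
`{(r, s) : s - f r ∈ J}`. -/
def Amalg {R S : Type u} [CommRing R] [CommRing S] (f : R →+* S) (J : Ideal S) :
    Subring (R × S) where
  carrier := {x | x.2 - f x.1 ∈ J}
  one_mem' := by simp
  zero_mem' := by simp
  add_mem' := by
    intro a b ha hb
    show (a + b).2 - f (a + b).1 ∈ J
    have h : (a + b).2 - f (a + b).1 = (a.2 - f a.1) + (b.2 - f b.1) := by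
      simp only [Prod.fst_add, Prod.snd_add, map_add]; ring
    rw [h]; exact J.add_mem ha hb
  neg_mem' := by
    intro a ha
    show (-a).2 - f (-a).1 ∈ J
    have h : (-a).2 - f (-a).1 = -(a.2 - f a.1) := by
      simp only [Prod.fst_neg, Prod.snd_neg, map_neg]; ring
    rw [h]; exact J.neg_mem ha
  mul_mem' := by
    intro a b ha hb
    show (a * b).2 - f (a * b).1 ∈ J
    have h : (a * b).2 - f (a * b).1 = (a.2 - f a.1) * b.2 + f a.1 * (b.2 - f b.1) := by
      simp only [Prod.fst_mul, Prod.snd_mul, map_mul]; ring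
    rw [h]; exact J.add_mem (J.mul_mem_right _ ha) (J.mul_mem_left _ hb)

/-- The canonical embedding `ι_R : R → R ⋈^f J`, `r ↦ (r, f r)`. -/
def amalgHom {R S : Type u} [CommRing R] [CommRing S] (f : R →+* S) (J : Ideal S) :
    R →+* ↥(Amalg f J) :=
  ((RingHom.id R).prod f).codRestrict _ (fun r => by
    show ((r, f r) : R × S).2 - f ((r, f r) : R × S).1 ∈ J
    simp)


section AuxIntegralDim

variable {R A : Type u} [CommRing R] [CommRing A]

/-- Integral ring maps do not increase Krull dimension. -/
lemma aux_dim_le_of_isIntegral (g : R →+* A) (hg : g.IsIntegral) :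
    ringKrullDim A ≤ ringKrullDim R := by
  letI := g.toAlgebra
  refine Order.krullDim_le_of_strictMono (PrimeSpectrum.comap g) ?_
  intro q₁ q₂ hlt
  obtain ⟨x, hx2, hx1⟩ := SetLike.exists_of_lt (show q₁.asIdeal < q₂.asIdeal from hlt)
  have := q₁.isPrime
  exact Ideal.comap_lt_comap_of_integral_mem_sdiff (R := R) hlt.le ⟨hx2, hx1⟩ (hg x)

lemma aux_lift_chain (g : R →+* A) (hg : g.IsIntegral) (hinj : Function.Injective g)
    (n : ℕ) :
    ∀ c : LTSeries (PrimeSpectrum R), c.length = n →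
      ∃ c' : LTSeries (PrimeSpectrum A), c'.length = c.length ∧
        (c'.last).asIdeal.comap g = (c.last).asIdeal := by
  letI := g.toAlgebra
  haveI : Algebra.IsIntegral R A := ⟨hg⟩
  induction n with
  | zero =>
    intro c hc
    have hp := (c.last).isPrime
    have hker : (⊥ : Ideal A).comap (algebraMap R A) ≤ (c.last).asIdeal := by
      have h0 : RingHom.ker (algebraMap R A) = ⊥ :=
        (RingHom.injective_iff_ker_eq_bot (algebraMap R A)).mp hinj
      rw [← RingHom.ker_eq_comap_bot, h0]
      exact bot_le
    obtain ⟨Q, -, hQp, hQ⟩ :=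
      Ideal.exists_ideal_over_prime_of_isIntegral (c.last).asIdeal ⊥ hker
    exact ⟨RelSeries.singleton _ ⟨Q, hQp⟩, by simp [hc], by simpa using (show Q.comap g = _ from hQ)⟩
  | succ n ih =>
    intro c hc
    obtain ⟨c', hlen, hlast⟩ := ih c.eraseLast (by simp [hc])
    have hne : c.length ≠ 0 := by omega
    have hstep : c.eraseLast.last < c.last := c.eraseLast_last_rel_last hne
    have hle : (c'.last).asIdeal.comap (algebraMap R A) ≤ (c.last).asIdeal := by
      show (c'.last).asIdeal.comap g ≤ (c.last).asIdeal
      rw [hlast]; exact le_of_lt hstep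
    have hp := (c.last).isPrime
    obtain ⟨Q, hQge, hQp, hQ⟩ :=
      Ideal.exists_ideal_over_prime_of_isIntegral (c.last).asIdeal (c'.last).asIdeal hle
    have hQlt : c'.last < (⟨Q, hQp⟩ : PrimeSpectrum A) := by
      refine lt_of_le_of_ne hQge fun h => (ne_of_lt hstep) (PrimeSpectrum.ext ?_)
      rw [← hlast, h]
      exact hQ
    refine ⟨c'.snoc ⟨Q, hQp⟩ hQlt, ?_, by simpa using (show Q.comap g = _ from hQ)⟩
    have : c'.length + 1 = c.length := by
      rw [hlen, RelSeries.eraseLast_length]; omega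
    simpa using this

lemma aux_le_dim_of_isIntegral (g : R →+* A) (hg : g.IsIntegral)
    (hinj : Function.Injective g) : ringKrullDim R ≤ ringKrullDim A := by
  refine iSup_le fun c => ?_
  obtain ⟨c', hlen, -⟩ := aux_lift_chain g hg hinj c.length c rfl
  rw [← hlen]
  exact Order.LTSeries.length_le_krullDim c'

lemma aux_dim_eq_of_isIntegral (g : R →+* A) (hg : g.IsIntegral)
    (hinj : Function.Injective g) : ringKrullDim A = ringKrullDim R :=
  le_antisymm (aux_dim_le_of_isIntegral g hg) (aux_le_dim_of_isIntegral g hg hinj)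

lemma aux_comap_map_eq (g : R →+* A) (hg : g.IsIntegral) (hinj : Function.Injective g)
    (p : Ideal R) (hp : p.IsPrime) : (p.map g).comap g = p := by
  letI := g.toAlgebra
  haveI : Algebra.IsIntegral R A := ⟨hg⟩
  haveI := hp
  have hker : (⊥ : Ideal A).comap (algebraMap R A) ≤ p := by
    have h0 : RingHom.ker (algebraMap R A) = ⊥ :=
      (RingHom.injective_iff_ker_eq_bot (algebraMap R A)).mp hinj
    rw [← RingHom.ker_eq_comap_bot, h0]
    exact bot_le
  obtain ⟨Q, -, hQp, hQ⟩ := Ideal.exists_ideal_over_prime_of_isIntegral p ⊥ hker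
  refine le_antisymm ?_ Ideal.le_comap_map
  calc (p.map g).comap g ≤ Q.comap g :=
        Ideal.comap_mono (Ideal.map_le_iff_le_comap.mpr (le_of_eq hQ.symm))
    _ = p := hQ

lemma aux_quotientMap_isIntegral {I : Ideal A} {g : R →+* A} {p : Ideal R}
    (H : p ≤ I.comap g) (hg : g.IsIntegral) :
    (Ideal.quotientMap I g H).IsIntegral := by
  rintro ⟨x⟩
  obtain ⟨P, P_monic, hPx⟩ := hg x
  refine ⟨P.map (Ideal.Quotient.mk _), P_monic.map _, ?_⟩
  show Polynomial.eval₂ _ (Ideal.Quotient.mk I x) _ = 0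
  rw [Polynomial.eval₂_map, Ideal.quotientMap_comp_mk H, ← Polynomial.hom_eval₂, hPx, map_zero]

end AuxIntegralDim

/-- If `J` is an ideal of `S` which is finitely generated as an `R`-module via
`f : R → S`, then `ι_R : R → R ⋈^f J` is integral, and for every prime `p` of `R` one has
`(pᵉ)ᶜ = p` and `dim ((R ⋈^f J) / pᵉ) = dim (R/p)`. -/
theorem statement2 {R S : Type u} [CommRing R] [CommRing S] (f : R →+* S) (J : Ideal S)
    (hJ0 : J ≠ ⊥) (hJ1 : J ≠ ⊤)
    (hfg : letI : Module R ↥J := Module.compHom ↥J f; Module.Finite R ↥J) :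
    (amalgHom f J).IsIntegral ∧
    ∀ p : Ideal R, p.IsPrime →
      (Ideal.map (amalgHom f J) p).comap (amalgHom f J) = p ∧
      ringKrullDim (↥(Amalg f J) ⧸ Ideal.map (amalgHom f J) p) = ringKrullDim (R ⧸ p) := by
  classical
  letI : Module R ↥J := Module.compHom ↥J f
  set φ := amalgHom f J with hφdef
  have hinj : Function.Injective φ := fun a b h => by
    have := congrArg (fun x : ↥(Amalg f J) => (x : R × S).1) h
    simpa [φ, amalgHom] using this
  letI : Algebra R ↥(Amalg f J) := φ.toAlgebra
  let L : ↥J →ₗ[R] ↥(Amalg f J) :=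
    { toFun := fun j => ⟨(0, (j : S)), by
        show (j : S) - f 0 ∈ J
        simpa using j.2⟩
      map_add' := fun x y => Subtype.ext (by
        show ((0 : R), ((x + y : ↥J) : S)) = ((0 : R), (x : S)) + ((0 : R), (y : S))
        simp)
      map_smul' := fun r x => Subtype.ext (by
        show ((0 : R), ((r • x : ↥J) : S)) = ((φ r : R × S) * ((0 : R), (x : S)))
        have h1 : ((r • x : ↥J) : S) = f r * (x : S) := rfl
        have h2 : (φ r : R × S) = (r, f r) := rfl
        rw [h1, h2]
        ext <;> simp) }
  have hfg' : Module.Finite R ↥J := hfg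
  have hfin : Module.Finite R ↥(Amalg f J) := by
    obtain ⟨s, hs⟩ := hfg'.fg_top
    refine ⟨⟨insert 1 (s.image L), ?_⟩⟩
    rw [eq_top_iff]
    rintro ⟨⟨r, t⟩, hrt⟩ -
    have hrt' : t - f r ∈ J := hrt
    have h1 : (⟨(r, t), hrt⟩ : ↥(Amalg f J)) = r • 1 + L ⟨t - f r, hrt'⟩ := by
      apply Subtype.ext
      show ((r, t) : R × S) = ((φ r : R × S) * 1) + ((0 : R), t - f r)
      have h2 : (φ r : R × S) = (r, f r) := rfl
      rw [h2]
      ext <;> simp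
    rw [h1]
    refine add_mem (Submodule.smul_mem _ _ (Submodule.subset_span (by simp))) ?_
    have hmem : L ⟨t - f r, hrt'⟩ ∈ Submodule.span R (L '' (s : Set ↥J)) := by
      rw [← Submodule.map_span, hs]
      exact ⟨_, trivial, rfl⟩
    refine Submodule.span_mono ?_ hmem
    intro z hz
    simp only [Finset.coe_insert, Finset.coe_image]
    exact Set.mem_insert_of_mem _ (by simpa using hz)
  have hφfin : φ.Finite := hfin
  have hφint : φ.IsIntegral := hφfin.to_isIntegral
  refine ⟨hφint, fun p hp => ?_⟩
  haveI := hp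
  have hcomap := aux_comap_map_eq φ hφint hinj p hp
  refine ⟨hcomap, ?_⟩
  set_option synthInstance.maxHeartbeats 1000000 in
  exact aux_dim_eq_of_isIntegral (Ideal.quotientMap (Ideal.map φ p) φ Ideal.le_comap_map)
    (aux_quotientMap_isIntegral Ideal.le_comap_map hφint)
    (Ideal.quotientMap_injective' (le_of_eq hcomap))
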